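/- arXiv:1206.5477 — 7 statements merged into one kernel-verified Lean document; each statement's English description precedes it below -/
import Mathlib

section
/- Let G be a finite simple graph. The Levi graph of the incidence structure N(G) (the bipartite graph on the point class V(G) and the block class {N(v) : v ∈ V(G)}, with adjacency given by membership) is connected if and only if G is connected and G is not bipartite. -/
open SimpleGraph

/-- The Levi graph of the incidence structure `N(G)`: one vertex class is `V(G)`,
the other class is the set of distinct neighbourhoods `{N(v) : v ∈ V(G)}`,
with adjacency given by membership. -/
def leviGraph {V : Type*} (G : SimpleGraph V) :
    SimpleGraph (V ⊕ {S : Set V // ∃ v, S = G.neighborSet v}) where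
  Adj x y :=
    (∃ u S, x = Sum.inl u ∧ y = Sum.inr S ∧ u ∈ S.1) ∨
    (∃ u S, x = Sum.inr S ∧ y = Sum.inl u ∧ u ∈ S.1)
  symm := by
    constructor
    rintro x y (⟨u, S, rfl, rfl, h⟩ | ⟨u, S, rfl, rfl, h⟩)
    · exact Or.inr ⟨u, S, rfl, rfl, h⟩
    · exact Or.inl ⟨u, S, rfl, rfl, h⟩
  loopless := by
    constructor
    rintro x (⟨u, S, rfl, h, _⟩ | ⟨u, S, rfl, h, _⟩) <;> simp at h

/-- "Touch" relation: a Levi-graph vertex touches `u : V` if it is `inl u`,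
or it is a block containing `u`. -/
def levTouch {V : Type*} (G : SimpleGraph V) :
    (V ⊕ {S : Set V // ∃ v, S = G.neighborSet v}) → V → Prop
  | .inl a, u => a = u
  | .inr S, u => u ∈ S.1

lemma reach_of_levi_walk {V : Type*} (G : SimpleGraph V) :
    ∀ {x y} (_ : (leviGraph G).Walk x y) (u w : V),
      levTouch G x u → levTouch G y w → G.Reachable u w := by
  intro x y p
  induction p with
  | nil =>
    rename_i z
    intro u w hu hw
    cases z with
    | inl a =>
      simp only [levTouch] at hu hw
      subst hu; subst hw
      exact Reachable.refl a
    | inr S =>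
      simp only [levTouch] at hu hw
      obtain ⟨v, hv⟩ := S.2
      rw [hv] at hu hw
      exact ((G.adj_symm hu).reachable).trans (hw : G.Adj v w).reachable
  | cons hadj q ih =>
    intro u w hu hw
    rcases hadj with ⟨a, S, hx, hz, ha⟩ | ⟨a, S, hx, hz, ha⟩
    · subst hx; subst hz
      simp only [levTouch] at hu
      subst hu
      exact ih a w ha hw
    · subst hx; subst hz
      simp only [levTouch] at hu
      obtain ⟨v, hv⟩ := S.2
      rw [hv] at hu ha
      have h1 : G.Reachable u a := ((G.adj_symm hu).reachable).trans (ha : G.Adj v a).reachable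
      exact h1.trans (ih a w rfl hw)

lemma levi_reach_of_even {V : Type*} (G : SimpleGraph V) :
    ∀ {u w} (p : G.Walk u w), Even p.length →
      (leviGraph G).Reachable (Sum.inl u) (Sum.inl w)
  | _, _, .nil, _ => Reachable.refl _
  | u, w, .cons (v := x) h1 (.cons (v := y) h2 q), he => by
    have he' : Even q.length := by
      simp only [SimpleGraph.Walk.length_cons, Nat.even_iff] at he
      rw [Nat.even_iff]; omega
    have r := levi_reach_of_even G q he'
    have a1 : (leviGraph G).Adj (Sum.inl u)
        (Sum.inr ⟨G.neighborSet x, ⟨x, rfl⟩⟩) :=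
      Or.inl ⟨u, ⟨G.neighborSet x, ⟨x, rfl⟩⟩, rfl, rfl, h1.symm⟩
    have a2 : (leviGraph G).Adj (Sum.inr (⟨G.neighborSet x, ⟨x, rfl⟩⟩ :
        {S : Set V // ∃ v, S = G.neighborSet v})) (Sum.inl y) :=
      Or.inr ⟨y, ⟨G.neighborSet x, ⟨x, rfl⟩⟩, rfl, rfl, h2⟩
    exact (a1.reachable.trans a2.reachable).trans r
  | _, _, .cons h .nil, he => by simp [Nat.even_iff] at he

lemma exists_even_walk {V : Type*} (G : SimpleGraph V)
    (hconn : G.Connected) (hnc : ¬ G.Colorable 2) (u w : V) :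
    ∃ p : G.Walk u w, Even p.length := by
  classical
  by_contra hno
  push_neg at hno
  apply hnc
  refine ⟨Coloring.mk
    (fun v => if ∃ p : G.Walk u v, Even p.length then (0 : Fin 2) else 1) ?_⟩
  intro a b hab
  by_cases ha : ∃ p : G.Walk u a, Even p.length <;>
    by_cases hb : ∃ p : G.Walk u b, Even p.length
  · -- both even-reachable: build odd closed walk at u, flip parity to w
    exfalso
    obtain ⟨pa, hpa⟩ := ha
    obtain ⟨pb, hpb⟩ := hb
    obtain ⟨q⟩ := hconn u w
    rcases Nat.even_or_odd q.length with hq | hq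
    · exact hno q hq
    · refine hno (((pa.append (Walk.cons hab Walk.nil)).append pb.reverse).append q) ?_
      rw [Nat.even_iff] at hpa hpb ⊢
      rw [Nat.odd_iff] at hq
      simp only [Walk.length_append, Walk.length_cons, Walk.length_nil,
        Walk.length_reverse]
      omega
  · simp [ha, hb]
  · simp [ha, hb]
  · -- both odd-only: walk to a is odd, extend by edge to get even walk to b
    exfalso
    obtain ⟨p⟩ := hconn u a
    have hodd : Odd p.length := by
      rcases Nat.even_or_odd p.length with h | h
      · exact absurd ⟨p, h⟩ ha
      · exact h
    refine hb ⟨p.append (Walk.cons hab Walk.nil), ?_⟩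
    simp only [Walk.length_append, Walk.length_cons, Walk.length_nil]
    rw [Nat.even_iff]
    rw [Nat.odd_iff] at hodd
    omega

lemma exists_neighbor {V : Type*} (G : SimpleGraph V)
    (hconn : G.Connected) (hnc : ¬ G.Colorable 2) (v : V) :
    ∃ x, G.Adj v x := by
  have hedge : ∃ a b, G.Adj a b := by
    by_contra h
    push_neg at h
    exact hnc ⟨Coloring.mk (fun _ => 0) (fun {a b} hab => absurd hab (h a b))⟩
  obtain ⟨a, b, hab⟩ := hedge
  obtain ⟨p⟩ := hconn v a
  cases p with
  | nil => exact ⟨b, hab⟩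
  | cons h q => exact ⟨_, h⟩

lemma fin2_eq_add_one {a b : Fin 2} (h : a ≠ b) : a = b + 1 := by
  revert h; revert a b; decide

lemma reach_const {W : Type*} (H : SimpleGraph W) (f : W → Fin 2)
    (hf : ∀ x y, H.Adj x y → f x = f y) {x y : W} (h : H.Reachable x y) :
    f x = f y := by
  obtain ⟨p⟩ := h
  induction p with
  | nil => rfl
  | cons h q ih => exact (hf _ _ h).trans ih

/-- For a finite simple graph `G`, the Levi graph of `N(G)` is connected if and only if
`G` is connected and `G` is not bipartite (i.e. admits no proper 2-colouring). -/
theorem leviGraph_connected_iff {V : Type*} [Fintype V] (G : SimpleGraph V) :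
    (leviGraph G).Connected ↔ G.Connected ∧ ¬ G.Colorable 2 := by
  classical
  constructor
  · intro hc
    have hGconn : G.Connected := by
      have hne : Nonempty V := by
        obtain ⟨x⟩ := hc.nonempty
        cases x with
        | inl u => exact ⟨u⟩
        | inr S => obtain ⟨v, _⟩ := S.2; exact ⟨v⟩
      rw [connected_iff]
      refine ⟨fun u w => ?_, hne⟩
      obtain ⟨p⟩ := hc.preconnected (Sum.inl u) (Sum.inl w)
      exact reach_of_levi_walk G p u w rfl rfl
    refine ⟨hGconn, ?_⟩
    rintro ⟨c⟩
    -- the "parity flip" invariant: constant on the connected Levi graph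
    set φ : (V ⊕ {S : Set V // ∃ v, S = G.neighborSet v}) → Fin 2 :=
      fun x => match x with
        | .inl u => c u
        | .inr S => c S.2.choose + 1 with hφ
    have hadj : ∀ x y, (leviGraph G).Adj x y → φ x = φ y := by
      rintro x y (⟨a, S, rfl, rfl, ha⟩ | ⟨a, S, rfl, rfl, ha⟩)
      · have hv : S.1 = G.neighborSet S.2.choose := S.2.choose_spec
        rw [hv] at ha
        have : c S.2.choose ≠ c a := c.valid (ha : G.Adj S.2.choose a)
        have h2 : c a = c S.2.choose + 1 := fin2_eq_add_one (Ne.symm this)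
        simpa [hφ] using h2
      · have hv : S.1 = G.neighborSet S.2.choose := S.2.choose_spec
        rw [hv] at ha
        have : c S.2.choose ≠ c a := c.valid (ha : G.Adj S.2.choose a)
        have h2 : c a = c S.2.choose + 1 := fin2_eq_add_one (Ne.symm this)
        simpa [hφ] using h2.symm
    have hconst : ∀ u w : V, c u = c w := by
      intro u w
      have := reach_const (leviGraph G) φ hadj
        (hc.preconnected (Sum.inl u) (Sum.inl w))
      simpa [hφ] using this
    have hnoedge : ∀ a b : V, ¬ G.Adj a b := by
      intro a b hab
      exact c.valid hab (hconst a b)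
    -- so G is a single vertex with empty neighbourhood: isolated block
    obtain ⟨v₀⟩ := hGconn.nonempty
    have hreach := hc.preconnected (Sum.inr ⟨G.neighborSet v₀, ⟨v₀, rfl⟩⟩)
      (Sum.inl v₀)
    obtain ⟨p⟩ := hreach
    cases p with
    | cons h q =>
      rcases h with ⟨a, S, hx, _, _⟩ | ⟨a, S, hx, hz, ha⟩
      · simp at hx
      · have hS : S = ⟨G.neighborSet v₀, ⟨v₀, rfl⟩⟩ := by
          injection hx.symm
        rw [hS] at ha
        exact hnoedge v₀ a ha
  · rintro ⟨hconn, hnc⟩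
    have hne : Nonempty V := hconn.nonempty
    obtain ⟨v₀⟩ := hne
    rw [connected_iff]
    refine ⟨fun x y => ?_, ⟨Sum.inl v₀⟩⟩
    -- reduce every Levi vertex to some `inl`
    have key : ∀ x : V ⊕ {S : Set V // ∃ v, S = G.neighborSet v},
        ∃ u : V, (leviGraph G).Reachable x (Sum.inl u) := by
      intro x
      cases x with
      | inl u => exact ⟨u, Reachable.refl _⟩
      | inr S =>
        obtain ⟨v, hv⟩ := S.2
        obtain ⟨z, hz⟩ := exists_neighbor G hconn hnc v
        refine ⟨z, Adj.reachable ?_⟩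
        exact Or.inr ⟨z, S, rfl, rfl, by rw [hv]; exact hz⟩
    obtain ⟨u, hu⟩ := key x
    obtain ⟨w, hw⟩ := key y
    have huw : (leviGraph G).Reachable (Sum.inl u) (Sum.inl w) := by
      obtain ⟨p, hp⟩ := exists_even_walk G hconn hnc u w
      exact levi_reach_of_even G p hp
    exact (hu.trans huw).trans hw.symm
end

section
/- Let G be a finite simple k-regular graph on n vertices (k ≥ 2) in which no two distinct vertices have the same neighbourhood. Then the incidence structure N(G) is a combinatorial (n_k) configuration — that is, any two distinct vertices of G have at most one common neighbour — if and only if the bipartite double cover D(G) of G contains no cycle of length 4. -/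
open SimpleGraph

/-- The bipartite double cover (Kronecker cover) of a simple graph. -/
def bipartiteDouble {V : Type*} (G : SimpleGraph V) : SimpleGraph (V × Bool) where
  Adj x y := G.Adj x.1 y.1 ∧ x.2 ≠ y.2
  symm := ⟨fun _ _ h => ⟨h.1.symm, h.2.symm⟩⟩
  loopless := ⟨fun _ h => h.2 rfl⟩

/-- Let `G` be a finite simple `k`-regular graph (`k ≥ 2`) in which no two distinct
vertices have the same neighbourhood.  Then `N(G)` is a combinatorial `(n_k)`
configuration — i.e. any two distinct vertices have at most one common neighbour —
if and only if the bipartite double cover `D(G)` contains no cycle of length 4. -/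
theorem config_iff_no_four_cycle_in_cover {V : Type*} [Fintype V] [DecidableEq V]
    (G : SimpleGraph V) [DecidableRel G.Adj] (k : ℕ) (hk : 2 ≤ k)
    (hreg : G.IsRegularOfDegree k)
    (hadm : ∀ u v : V, G.neighborSet u = G.neighborSet v → u = v) :
    (∀ u v : V, u ≠ v → (G.neighborFinset u ∩ G.neighborFinset v).card ≤ 1) ↔
      ¬ ∃ (x : V × Bool) (w : (bipartiteDouble G).Walk x x), w.IsCycle ∧ w.length = 4 := by
  constructor
  · intro hconf
    rintro ⟨x, w, hc, hl⟩
    cases w with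
    | nil => simp at hl
    | cons h1 w =>
      cases w with
      | nil => simp at hl
      | cons h2 w =>
        cases w with
        | nil => simp at hl
        | cons h3 w =>
          cases w with
          | nil => simp at hl
          | cons h4 w =>
            cases w with
            | cons h5 w => simp [SimpleGraph.Walk.length_cons] at hl
            | nil =>
              rename_i y1 y2 y3
              have hnd := hc.2
              simp [SimpleGraph.Walk.support_cons, List.nodup_cons] at hnd
              -- hnd gives distinctness facts among y1, y2, y3, x
              obtain ⟨⟨hy12, hy13, hy1x⟩, ⟨hy23, hy2x⟩, hy3x⟩ := hnd
              have hb1 : x.2 ≠ y1.2 := h1.2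
              have hb2 : y1.2 ≠ y2.2 := h2.2
              have hb3 : y2.2 ≠ y3.2 := h3.2
              have hxy2 : x.2 = y2.2 := by
                cases hx : x.2 <;> cases hy : y2.2 <;> simp_all
              have hy1y3 : y1.2 = y3.2 := by
                cases hx : y1.2 <;> cases hy : y3.2 <;> simp_all
              have hne : x.1 ≠ y2.1 := by
                intro h; exact hy2x (Prod.ext h.symm hxy2.symm)
              have hne2 : y1.1 ≠ y3.1 := by
                intro h; exact hy13 (Prod.ext h hy1y3)
              have hmem1 : y1.1 ∈ G.neighborFinset x.1 ∩ G.neighborFinset y2.1 := by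
                simp [SimpleGraph.mem_neighborFinset]
                exact ⟨h1.1, h2.1.symm⟩
              have hmem2 : y3.1 ∈ G.neighborFinset x.1 ∩ G.neighborFinset y2.1 := by
                simp [SimpleGraph.mem_neighborFinset]
                exact ⟨h4.1.symm, h3.1⟩
              have hsub : ({y1.1, y3.1} : Finset V) ⊆
                  G.neighborFinset x.1 ∩ G.neighborFinset y2.1 := by
                intro z hz
                simp at hz
                rcases hz with rfl | rfl <;> assumption
              have h2le : 2 ≤ (G.neighborFinset x.1 ∩ G.neighborFinset y2.1).card := by
                calc 2 = ({y1.1, y3.1} : Finset V).card := (Finset.card_pair hne2).symm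
                  _ ≤ _ := Finset.card_le_card hsub
              have := hconf x.1 y2.1 hne
              omega
  · intro h u v huv
    by_contra hle
    push_neg at hle
    obtain ⟨a, ha, b, hb, hab⟩ := Finset.one_lt_card.mp hle
    simp [SimpleGraph.mem_neighborFinset] at ha hb
    apply h
    refine ⟨(u, false), SimpleGraph.Walk.cons (v := (a, true)) (show (bipartiteDouble G).Adj _ _ from ⟨ha.1, by simp⟩)
      (SimpleGraph.Walk.cons (v := (v, false)) (show (bipartiteDouble G).Adj _ _ from ⟨ha.2.symm, by simp⟩)
      (SimpleGraph.Walk.cons (v := (b, true)) (show (bipartiteDouble G).Adj _ _ from ⟨hb.2, by simp⟩)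
      (SimpleGraph.Walk.cons (v := (u, false)) (show (bipartiteDouble G).Adj _ _ from ⟨hb.1.symm, by simp⟩)
      SimpleGraph.Walk.nil))), ?_, ?_⟩
    · constructor
      · constructor
        · simp [SimpleGraph.Walk.isTrail_def, SimpleGraph.Walk.edges_cons]
          tauto
        · simp
      · simp [SimpleGraph.Walk.support_cons]
        tauto
    · simp
end

section
/- Let G be a finite simple graph in which no two distinct vertices have the same neighbourhood. Then the configuration obtained from G by the V-construction is combinatorially self-polar: its Levi graph admits a graph automorphism of order two that interchanges the two bipartition classes (the class of points V(G) and the class of blocks {N(v) : v ∈ V(G)}). -/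
open SimpleGraph

noncomputable def polarMap {V : Type*} (G : SimpleGraph V) :
    V ⊕ {S : Set V // ∃ v, S = G.neighborSet v} →
    V ⊕ {S : Set V // ∃ v, S = G.neighborSet v}
  | Sum.inl u => Sum.inr ⟨G.neighborSet u, u, rfl⟩
  | Sum.inr S => Sum.inl S.2.choose

lemma polarMap_invol {V : Type*} (G : SimpleGraph V)
    (hadm : ∀ u v : V, G.neighborSet u = G.neighborSet v → u = v) :
    ∀ x, polarMap G (polarMap G x) = x := by
  rintro (u | S)
  · simp only [polarMap]
    congr 1
    have h := (⟨u, rfl⟩ : ∃ v, G.neighborSet u = G.neighborSet v).choose_spec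
    exact (hadm _ _ h).symm
  · simp only [polarMap]
    congr 1
    exact Subtype.ext S.2.choose_spec.symm

/-- The configuration obtained by the V-construction from an admissible finite graph `G`
(no two distinct vertices share the same neighbourhood) is combinatorially self-polar:
its Levi graph has an automorphism of order two interchanging the class of points `V(G)`
with the class of blocks `{N(v) : v ∈ V(G)}`. -/
theorem V_construction_self_polar {V : Type*} [Fintype V] (G : SimpleGraph V)
    (hadm : ∀ u v : V, G.neighborSet u = G.neighborSet v → u = v) :
    ∃ φ : leviGraph G ≃g leviGraph G,
      (∀ x, φ (φ x) = x) ∧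
      (∀ u : V, ∃ S, φ (Sum.inl u) = Sum.inr S) ∧
      (∀ S, ∃ u : V, φ (Sum.inr S) = Sum.inl u) := by
  have inv := polarMap_invol G hadm
  have hadj : ∀ x y, (leviGraph G).Adj x y →
      (leviGraph G).Adj (polarMap G x) (polarMap G y) := by
    rintro x y (⟨u, S, rfl, rfl, h⟩ | ⟨u, S, rfl, rfl, h⟩)
    · -- x = inl u, y = inr S;  φ x = inr N(u), φ y = inl (choose S)
      refine Or.inr ⟨S.2.choose, ⟨G.neighborSet u, u, rfl⟩, rfl, rfl, ?_⟩
      have hS := S.2.choose_spec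
      rw [hS] at h
      exact (G.mem_neighborSet _ _).2 ((G.mem_neighborSet _ _).1 h).symm
    · refine Or.inl ⟨S.2.choose, ⟨G.neighborSet u, u, rfl⟩, rfl, rfl, ?_⟩
      have hS := S.2.choose_spec
      rw [hS] at h
      exact (G.mem_neighborSet _ _).2 ((G.mem_neighborSet _ _).1 h).symm
  refine ⟨⟨⟨polarMap G, polarMap G, inv, inv⟩, ?_⟩, inv, fun u => ⟨_, rfl⟩,
    fun S => ⟨_, rfl⟩⟩
  intro x y
  constructor
  · intro h
    have := hadj _ _ h
    simpa only [Equiv.coe_fn_mk, inv] using this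
  · exact hadj x y
end

section
/- Let S be the unit sphere in ℝ³ centered at the origin, let N = (0,0,1) be the north pole, and let π denote stereographic projection from N onto the plane {z = 0}, identified with ℝ². Let P be an affine plane in ℝ³ with N ∉ P such that S ∩ P contains at least two points (so S ∩ P is a circle on S not through N). Then the image π(S ∩ P) is a circle in the plane: there exist a point c ∈ ℝ² and a radius r > 0 such that π(S ∩ P) equals the metric sphere of center c and radius r in ℝ². -/
open Metric

/-- Stereographic projection from the north pole `(0,0,1)` of the unit sphere in `ℝ³`
onto the plane `{z = 0}`, identified with `ℝ²`: the image of `p` is the unique point of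
that plane on the line through the north pole and `p`. -/
noncomputable def stereoProj :
    EuclideanSpace ℝ (Fin 3) → EuclideanSpace ℝ (Fin 2) := fun p =>
  (EuclideanSpace.equiv (Fin 2) ℝ).symm ![p 0 / (1 - p 2), p 1 / (1 - p 2)]

/-- The north pole `N = (0,0,1)` of the unit sphere in `ℝ³`. -/
noncomputable def northPole : EuclideanSpace ℝ (Fin 3) :=
  (EuclideanSpace.equiv (Fin 3) ℝ).symm ![0, 0, 1]

set_option maxHeartbeats 1000000

lemma sqrt_eq_iff'' {A r : ℝ} (hA : 0 ≤ A) (hr : 0 ≤ r) : Real.sqrt A = r ↔ A = r ^ 2 :=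
  ⟨fun h => by rw [← h, Real.sq_sqrt hA], fun h => by rw [h, Real.sqrt_sq hr]⟩

lemma mem_sphere3_iff (p : EuclideanSpace ℝ (Fin 3)) :
    p ∈ sphere (0 : EuclideanSpace ℝ (Fin 3)) 1 ↔ p 0 ^ 2 + p 1 ^ 2 + p 2 ^ 2 = 1 := by
  rw [mem_sphere_zero_iff_norm, EuclideanSpace.norm_eq, show (1:ℝ) = Real.sqrt 1 by simp,
    Real.sqrt_inj (by positivity) (by norm_num)]
  simp [Fin.sum_univ_three, sq_abs]

lemma mem_sphere2_iff (q c : EuclideanSpace ℝ (Fin 2)) (r : ℝ) (hr : 0 ≤ r) :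
    q ∈ sphere c r ↔ (q 0 - c 0) ^ 2 + (q 1 - c 1) ^ 2 = r ^ 2 := by
  rw [mem_sphere, EuclideanSpace.dist_eq, sqrt_eq_iff'' (by positivity) hr]
  simp [Fin.sum_univ_two, Real.dist_eq, sq_abs]

lemma inner3 (n x : EuclideanSpace ℝ (Fin 3)) :
    (inner ℝ n x : ℝ) = n 0 * x 0 + n 1 * x 1 + n 2 * x 2 := by
  simp [PiLp.inner_apply, Fin.sum_univ_three]
  ring

lemma exists_normal (P : AffineSubspace ℝ (EuclideanSpace ℝ (Fin 3)))
    (hP : Module.finrank ℝ P.direction = 2) (x₀ : EuclideanSpace ℝ (Fin 3)) (hx₀ : x₀ ∈ P) :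
    ∃ n : EuclideanSpace ℝ (Fin 3), ‖n‖ = 1 ∧
      ∀ x, x ∈ P ↔ (inner ℝ n x : ℝ) = inner ℝ n x₀ := by
  have hdim : Module.finrank ℝ (EuclideanSpace ℝ (Fin 3)) = 3 := by simp
  have horth : Module.finrank ℝ (P.directionᗮ) = 1 := by
    have := Submodule.finrank_add_finrank_orthogonal (K := P.direction)
    omega
  obtain ⟨v, hv, hvne⟩ : ∃ v ∈ P.directionᗮ, v ≠ 0 := by
    by_contra h
    push_neg at h
    have : P.directionᗮ = ⊥ := by
      ext w; simp only [Submodule.mem_bot]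
      constructor
      · intro hw; by_contra hne; exact hne (h w hw)
      · rintro rfl; exact Submodule.zero_mem _
    rw [this] at horth; simp at horth
  refine ⟨‖v‖⁻¹ • v, ?_, ?_⟩
  · simp [norm_smul, inv_mul_cancel₀ (norm_ne_zero_iff.2 hvne)]
  · intro x
    have hn : ‖v‖⁻¹ • v ∈ P.directionᗮ := Submodule.smul_mem _ _ hv
    have hdir : P.direction = (Submodule.span ℝ {‖v‖⁻¹ • v})ᗮ := by
      apply Submodule.eq_of_le_of_finrank_eq
      · intro w hw
        rw [Submodule.mem_orthogonal]
        intro u hu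
        obtain ⟨c, rfl⟩ := Submodule.mem_span_singleton.1 hu
        rw [real_inner_smul_left]
        have h0 := (Submodule.mem_orthogonal _ _).1 hn w hw
        rw [real_inner_comm] at h0
        rw [h0, mul_zero]
      · rw [hP]
        have h1 : Module.finrank ℝ (Submodule.span ℝ {‖v‖⁻¹ • v}) = 1 := by
          rw [finrank_span_singleton]
          simp [smul_eq_zero, hvne, norm_ne_zero_iff.2 hvne]
        have := Submodule.finrank_add_finrank_orthogonal (K := Submodule.span ℝ {‖v‖⁻¹ • v})
        omega
    rw [← AffineSubspace.vsub_right_mem_direction_iff_mem hx₀ x, hdir]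
    constructor
    · intro h
      have h1 := (Submodule.mem_orthogonal _ _).1 h (‖v‖⁻¹ • v) (Submodule.mem_span_singleton_self _)
      have h2 : (inner ℝ (‖v‖⁻¹ • v) (x - x₀) : ℝ) = 0 := h1
      rw [inner_sub_right] at h2; linarith
    · intro h
      rw [Submodule.mem_orthogonal]
      intro u hu
      obtain ⟨c, rfl⟩ := Submodule.mem_span_singleton.1 hu
      have h2 : (inner ℝ (‖v‖⁻¹ • v) (x - x₀) : ℝ) = 0 := by
        rw [inner_sub_right]; linarith
      rw [real_inner_smul_left]
      have h3 : (inner ℝ (‖v‖⁻¹ • v) (x -ᵥ x₀) : ℝ) = 0 := h2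
      rw [h3, mul_zero]

/-- Let `P` be an affine plane in `ℝ³` not containing the north pole `N = (0,0,1)` and
meeting the unit sphere `S` in at least two points (so `S ∩ P` is a circle on `S` not
through `N`).  Then the stereographic image of `S ∩ P` is a circle in the plane `ℝ²`. -/
theorem stereoProj_image_circle (P : AffineSubspace ℝ (EuclideanSpace ℝ (Fin 3)))
    (hP : Module.finrank ℝ P.direction = 2)
    (hN : northPole ∉ P)
    (htwo : (sphere (0 : EuclideanSpace ℝ (Fin 3)) 1 ∩ (P : Set (EuclideanSpace ℝ (Fin 3)))).Nontrivial) :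
    ∃ (c : EuclideanSpace ℝ (Fin 2)) (r : ℝ), 0 < r ∧
      stereoProj '' (sphere (0 : EuclideanSpace ℝ (Fin 3)) 1 ∩ P) = sphere c r := by
  obtain ⟨p₀, ⟨hp₀S, hp₀P⟩, p₁, ⟨hp₁S, hp₁P⟩, hpne⟩ := htwo
  obtain ⟨n, hn1, hmem⟩ := exists_normal P hP p₀ hp₀P
  set a := n 0 with ha
  set b := n 1 with hb
  set m := n 2 with hm
  set d : ℝ := inner ℝ n p₀ with hd
  -- the plane equation in coordinates
  have hplane : ∀ x, x ∈ P ↔ a * x 0 + b * x 1 + m * x 2 = d := by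
    intro x
    rw [hmem x, inner3]
  -- unit normal in coordinates
  have hunit : a ^ 2 + b ^ 2 + m ^ 2 = 1 := by
    have : n ∈ sphere (0 : EuclideanSpace ℝ (Fin 3)) 1 := by
      rwa [mem_sphere_zero_iff_norm]
    rwa [mem_sphere3_iff] at this
  -- N not on the plane
  have hNcoord : m ≠ d := by
    intro h
    apply hN
    rw [hplane]
    have h0 : northPole 0 = 0 := rfl
    have h1 : northPole 1 = 0 := rfl
    have h2 : northPole 2 = 1 := rfl
    rw [h0, h1, h2]; linarith
  have hene : m - d ≠ 0 := sub_ne_zero.2 hNcoord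
  -- |d| < 1
  have habs : ∀ p ∈ sphere (0 : EuclideanSpace ℝ (Fin 3)) 1, (inner ℝ n p : ℝ) = d →
      d = 1 → p = n := by
    intro p hpS hpd h1
    have hpn : ‖p‖ = 1 := mem_sphere_zero_iff_norm.1 hpS
    have : (inner ℝ n p : ℝ) = 1 := by rw [hpd, h1]
    exact ((inner_eq_one_iff_of_norm_eq_one hn1 hpn).1 this).symm
  have hd2 : d ^ 2 < 1 := by
    have hle : |d| ≤ 1 := by
      have := abs_real_inner_le_norm n p₀
      rw [hn1, mem_sphere_zero_iff_norm.1 hp₀S] at this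
      simpa [hd] using this
    rcases lt_or_eq_of_le hle with h | h
    · nlinarith [abs_nonneg d, sq_abs d]
    · exfalso
      have hip₀ : (inner ℝ n p₀ : ℝ) = d := rfl
      have hip₁ : (inner ℝ n p₁ : ℝ) = d := (hmem p₁).1 hp₁P
      rcases (abs_eq (by norm_num : (0:ℝ) ≤ 1)).1 h with h1 | h1
      · have e0 := habs p₀ hp₀S hip₀ h1
        have e1 := habs p₁ hp₁S hip₁ h1
        exact hpne (e0.trans e1.symm)
      · have hp₀n : ‖p₀‖ = 1 := mem_sphere_zero_iff_norm.1 hp₀S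
        have hp₁n : ‖p₁‖ = 1 := mem_sphere_zero_iff_norm.1 hp₁S
        have i0 : (inner ℝ n (-p₀) : ℝ) = 1 := by rw [inner_neg_right, hip₀, h1]; ring
        have i1 : (inner ℝ n (-p₁) : ℝ) = 1 := by rw [inner_neg_right, hip₁, h1]; ring
        have e0 := (inner_eq_one_iff_of_norm_eq_one hn1 (by rwa [norm_neg])).1 i0
        have e1 := (inner_eq_one_iff_of_norm_eq_one hn1 (by rwa [norm_neg])).1 i1
        exact hpne (neg_injective (e0.symm.trans e1))
  -- the circle data
  set c : EuclideanSpace ℝ (Fin 2) :=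
    (EuclideanSpace.equiv (Fin 2) ℝ).symm ![-a / (m - d), -b / (m - d)] with hc
  set r : ℝ := Real.sqrt (1 - d ^ 2) / |m - d| with hr
  have hrpos : 0 < r := div_pos (Real.sqrt_pos.2 (by linarith)) (abs_pos.2 hene)
  refine ⟨c, r, hrpos, ?_⟩
  have hc0 : c 0 = -a / (m - d) := rfl
  have hc1 : c 1 = -b / (m - d) := rfl
  have hr2 : r ^ 2 = (1 - d ^ 2) / (m - d) ^ 2 := by
    rw [hr, div_pow, Real.sq_sqrt (by linarith), sq_abs]
  ext q
  simp only [Set.mem_image, Set.mem_inter_iff]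
  constructor
  · rintro ⟨p, ⟨hpS, hpP⟩, rfl⟩
    have hps := (mem_sphere3_iff p).1 hpS
    have hpp := (hplane p).1 hpP
    have hp2 : p 2 ≠ 1 := by
      intro h2
      apply hN
      have h0 : p 0 = 0 := by nlinarith
      have h1 : p 1 = 0 := by nlinarith
      have : p = northPole := by
        ext i
        fin_cases i
        · exact h0
        · exact h1
        · exact h2
      rwa [← this]
    have ht : (1 : ℝ) - p 2 ≠ 0 := sub_ne_zero.2 (Ne.symm hp2)
    rw [mem_sphere2_iff _ _ _ hrpos.le, hr2]
    have hq0 : stereoProj p 0 = p 0 / (1 - p 2) := rfl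
    have hq1 : stereoProj p 1 = p 1 / (1 - p 2) := rfl
    rw [hq0, hq1, hc0, hc1]
    have key : (p 0 * (m - d) + a * (1 - p 2)) ^ 2 + (p 1 * (m - d) + b * (1 - p 2)) ^ 2
        = (1 - d ^ 2) * (1 - p 2) ^ 2 := by
      linear_combination (m - d) ^ 2 * hps + 2 * (m - d) * (1 - p 2) * hpp
        + (1 - p 2) ^ 2 * hunit
    have hA : p 0 / (1 - p 2) - -a / (m - d)
        = (p 0 * (m - d) + a * (1 - p 2)) / ((1 - p 2) * (m - d)) := by
      field_simp
      ring
    have hB : p 1 / (1 - p 2) - -b / (m - d)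
        = (p 1 * (m - d) + b * (1 - p 2)) / ((1 - p 2) * (m - d)) := by
      field_simp
      ring
    rw [hA, hB, div_pow, div_pow, ← add_div, key, mul_pow,
      mul_comm ((1 : ℝ) - d ^ 2) ((1 - p 2) ^ 2),
      mul_div_mul_left _ _ (pow_ne_zero 2 ht)]
  · intro hq
    rw [mem_sphere2_iff _ _ _ hrpos.le, hr2, hc0, hc1] at hq
    have hA : q 0 - -a / (m - d) = (q 0 * (m - d) + a) / (m - d) := by
      field_simp
      ring
    have hB : q 1 - -b / (m - d) = (q 1 * (m - d) + b) / (m - d) := by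
      field_simp
      ring
    rw [hA, hB, div_pow, div_pow, ← add_div,
      div_eq_div_iff (pow_ne_zero 2 hene) (pow_ne_zero 2 hene)] at hq
    have hQ : (q 0 * (m - d) + a) ^ 2 + (q 1 * (m - d) + b) ^ 2 = 1 - d ^ 2 :=
      mul_right_cancel₀ (pow_ne_zero 2 hene) hq
    set s : ℝ := q 0 ^ 2 + q 1 ^ 2 + 1 with hs
    have hspos : 0 < s := by positivity
    have hsne : s ≠ 0 := hspos.ne'
    refine ⟨(EuclideanSpace.equiv (Fin 3) ℝ).symm
      ![2 * q 0 / s, 2 * q 1 / s, (s - 2) / s], ⟨?_, ?_⟩, ?_⟩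
    · rw [mem_sphere3_iff]
      show (2 * q 0 / s) ^ 2 + (2 * q 1 / s) ^ 2 + ((s - 2) / s) ^ 2 = 1
      field_simp
      rw [hs]; ring
    · refine (hplane _).2 ?_
      show a * (2 * q 0 / s) + b * (2 * q 1 / s) + m * ((s - 2) / s) = d
      have key2 : a * (2 * q 0) + b * (2 * q 1) + m * (s - 2) = d * s := by
        apply mul_left_cancel₀ hene
        have hkey : (m - d) * (a * (2 * q 0) + b * (2 * q 1) + m * (s - 2)) =
            ((q 0 * (m - d) + a) ^ 2 + (q 1 * (m - d) + b) ^ 2) + d ^ 2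
              - (a ^ 2 + b ^ 2 + m ^ 2) + (m - d) * (d * s) := by
          rw [hs]; ring
        rw [hkey, hQ, hunit]; ring
      field_simp
      linear_combination key2
    · ext i
      have h1mp2 : (1 : ℝ) - (s - 2) / s = 2 / s := by
        field_simp
        ring
      fin_cases i
      · show (2 * q 0 / s) / (1 - (s - 2) / s) = q 0
        rw [h1mp2]
        field_simp
      · show (2 * q 1 / s) / (1 - (s - 2) / s) = q 1
        rw [h1mp2]
        field_simp
end

section
/- Every combinatorial (n_3) configuration can be realized by points and circles in the Euclidean plane: if P is a finite set of n points and B is a family of n blocks, each block a 3-element subset of P, such that every point lies in exactly 3 blocks and any two distinct points lie in at most one common block, then there exist an injective map f : P → ℝ² and an injective assignment of a circle (metric sphere of positive radius) c_b ⊆ ℝ² to each block b ∈ B such that for every point p and block b, f(p) ∈ c_b if and only if p ∈ b. -/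
open Metric

section helpers

noncomputable def pp (x : ℝ) : EuclideanSpace ℝ (Fin 2) := WithLp.toLp 2 ![x, x^2]

noncomputable def ctrFn (a b c : ℝ) : EuclideanSpace ℝ (Fin 2) :=
  WithLp.toLp 2 ![(a*b*c + (-(a+b+c))*(a*b+a*c+b*c))/2,
    (1 - (a*b+a*c+b*c + (-(a+b+c))*(a+b+c)))/2]

lemma quartic (a b c x : ℝ) :
    dist (pp x) (ctrFn a b c) ^ 2 - dist (pp a) (ctrFn a b c) ^ 2
      = (x-a)*(x-b)*(x-c)*(x+(a+b+c)) := by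
  simp only [EuclideanSpace.dist_eq, pp, ctrFn, Fin.sum_univ_two]
  rw [Real.sq_sqrt (by positivity), Real.sq_sqrt (by positivity)]
  simp only [PiLp.toLp_apply, Matrix.cons_val_zero, Matrix.cons_val_one, Matrix.head_cons, Real.dist_eq, sq_abs]
  ring

lemma pp_inj : Function.Injective pp := by
  intro x y h
  have := congrArg (fun v : EuclideanSpace ℝ (Fin 2) => v 0) h
  simpa [pp, PiLp.toLp_apply] using this

/-- membership on the circle through three parabola points, for positive parameters -/
lemma mem_circ (a b c x : ℝ) (ha : 0 < a) (hb : 0 < b) (hc : 0 < c) (hx : 0 < x) :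
    dist (pp x) (ctrFn a b c) = dist (pp a) (ctrFn a b c) ↔ (x = a ∨ x = b ∨ x = c) := by
  have h4 : x + (a+b+c) ≠ 0 := by positivity
  constructor
  · intro h
    have h0 : (x-a)*(x-b)*(x-c)*(x+(a+b+c)) = 0 := by rw [← quartic a b c x, h]; ring
    rcases mul_eq_zero.1 h0 with h0 | h0
    · rcases mul_eq_zero.1 h0 with h0 | h0
      · rcases mul_eq_zero.1 h0 with h0 | h0
        · exact Or.inl (by linarith)
        · exact Or.inr (Or.inl (by linarith))
      · exact Or.inr (Or.inr (by linarith))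
    · exact absurd h0 h4
  · intro h
    have key : dist (pp x) (ctrFn a b c) ^ 2 = dist (pp a) (ctrFn a b c) ^ 2 := by
      have q := quartic a b c x
      rcases h with rfl | rfl | rfl <;> nlinarith [q]
    nlinarith [dist_nonneg (x := pp x) (y := ctrFn a b c), dist_nonneg (x := pp a) (y := ctrFn a b c), key]

noncomputable def tri (s : Finset ℝ) : ℝ × ℝ × ℝ :=
  match s.sort (· ≤ ·) with
  | [a, b, c] => (a, b, c)
  | _ => (0, 0, 0)

lemma tri_spec (s : Finset ℝ) (hs : s.card = 3) :
    ∃ a b c : ℝ, tri s = (a, b, c) ∧ s = {a, b, c} ∧ a ≠ b ∧ a ≠ c ∧ b ≠ c := by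
  have hlen : (s.sort (· ≤ ·)).length = 3 := by rw [Finset.length_sort]; exact hs
  have hnd : (s.sort (· ≤ ·)).Nodup := s.sort_nodup _
  have hmem : ∀ x, x ∈ s.sort (· ≤ ·) ↔ x ∈ s := fun x => Finset.mem_sort _
  rcases hL : s.sort (· ≤ ·) with _ | ⟨a, _ | ⟨b, _ | ⟨c, _ | ⟨d, L⟩⟩⟩⟩ <;>
    rw [hL] at hlen <;> simp_all
  have htri : tri s = (a, b, c) := by unfold tri; rw [hL]
  refine ⟨a, b, c, htri, ?_, ?_, ?_, ?_⟩
  · ext x; rw [← hmem x]; simp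
  · simp_all
  · simp_all
  · simp_all

end helpers

/-- Every combinatorial `(n₃)` configuration can be realized by points and circles in the
Euclidean plane: given `n` points and a family of `n` blocks, each a 3-element set of
points, such that every point lies in exactly 3 blocks and any two distinct points lie in
at most one common block, there are an injective placement of the points in `ℝ²` and an
injective assignment of circles (metric spheres of positive radius) to the blocks
realizing exactly the given incidences. -/
theorem n3_configuration_point_circle_realizable
    (n : ℕ) (P : Type*) [Fintype P] [DecidableEq P]
    (blocks : Finset (Finset P))
    (hnP : Fintype.card P = n)
    (hnB : blocks.card = n)
    (hblock3 : ∀ b ∈ blocks, b.card = 3)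
    (hpoint3 : ∀ p : P, (blocks.filter (fun b => p ∈ b)).card = 3)
    (hlineal : ∀ p q : P, p ≠ q → (blocks.filter (fun b => p ∈ b ∧ q ∈ b)).card ≤ 1) :
    ∃ (f : P → EuclideanSpace ℝ (Fin 2))
      (ctr : Finset P → EuclideanSpace ℝ (Fin 2)) (rad : Finset P → ℝ),
      Function.Injective f ∧
      (∀ b ∈ blocks, 0 < rad b) ∧
      (∀ b ∈ blocks, ∀ b' ∈ blocks,
        sphere (ctr b) (rad b) = sphere (ctr b') (rad b') → b = b') ∧
      (∀ (p : P), ∀ b ∈ blocks, (f p ∈ sphere (ctr b) (rad b) ↔ p ∈ b)) := by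
  classical
  set t : P → ℝ := fun p => ((Fintype.equivFin P p : ℕ) : ℝ) + 1 with ht
  have ht_pos : ∀ p, 0 < t p := fun p => by positivity
  have ht_inj : Function.Injective t := by
    intro p q h
    have : ((Fintype.equivFin P p : ℕ) : ℝ) = ((Fintype.equivFin P q : ℕ) : ℝ) := by
      simpa [ht] using h
    exact (Fintype.equivFin P).injective (Fin.ext (Nat.cast_injective this))
  set f : P → EuclideanSpace ℝ (Fin 2) := fun p => pp (t p) with hf
  set ctr : Finset P → EuclideanSpace ℝ (Fin 2) := fun b =>
    ctrFn (tri (b.image t)).1 (tri (b.image t)).2.1 (tri (b.image t)).2.2 with hctr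
  set rad : Finset P → ℝ := fun b => dist (pp (tri (b.image t)).1) (ctr b) with hrad
  -- basic data for each block
  have block_data : ∀ b ∈ blocks,
      ∃ a bb c : ℝ, 0 < a ∧ 0 < bb ∧ 0 < c ∧ a ≠ bb ∧ a ≠ c ∧ bb ≠ c ∧
        b.image t = {a, bb, c} ∧ tri (b.image t) = (a, bb, c) := by
    intro b hb
    have hcard : (b.image t).card = 3 := by
      rw [Finset.card_image_of_injective _ ht_inj]; exact hblock3 b hb
    obtain ⟨a, bb, c, htri, hset, h12, h13, h23⟩ := tri_spec (b.image t) hcard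
    have hpos : ∀ x ∈ b.image t, 0 < x := by
      intro x hx
      obtain ⟨p, -, rfl⟩ := Finset.mem_image.1 hx
      exact ht_pos p
    refine ⟨a, bb, c, ?_, ?_, ?_, h12, h13, h23, hset, htri⟩ <;>
    · apply hpos; rw [hset]; simp
  -- incidence
  have hinc : ∀ (p : P), ∀ b ∈ blocks, (f p ∈ sphere (ctr b) (rad b) ↔ p ∈ b) := by
    intro p b hb
    obtain ⟨a, bb, c, ha, hbb, hc, -, -, -, hset, htri⟩ := block_data b hb
    simp only [mem_sphere, hrad, hctr, hf, htri]
    rw [mem_circ a bb c (t p) ha hbb hc (ht_pos p)]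
    constructor
    · rintro (h | h | h) <;>
      · have : t p ∈ b.image t := by rw [hset, h]; simp
        obtain ⟨q, hq, hqt⟩ := Finset.mem_image.1 this
        rwa [← ht_inj hqt]
    · intro hp
      have : t p ∈ ({a, bb, c} : Finset ℝ) := by
        rw [← hset]; exact Finset.mem_image_of_mem t hp
      simpa using this
  -- positive radii
  have hradpos : ∀ b ∈ blocks, 0 < rad b := by
    intro b hb
    obtain ⟨a, bb, c, ha, hbb, hc, h12, -, -, hset, htri⟩ := block_data b hb
    have h' : rad b = dist (pp a) (ctrFn a bb c) := by
      simp only [hrad, hctr, htri]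
    rw [h']
    rcases (dist_nonneg (x := pp a) (y := ctrFn a bb c)).lt_or_eq with h | h
    · exact h
    exfalso
    have hb0 : dist (pp bb) (ctrFn a bb c) = dist (pp a) (ctrFn a bb c) :=
      (mem_circ a bb c bb ha hbb hc hbb).2 (Or.inr (Or.inl rfl))
    have h1 : pp a = ctrFn a bb c := by rw [← dist_eq_zero, ← h]
    have h2 : pp bb = ctrFn a bb c := by rw [← dist_eq_zero, hb0, ← h]
    exact h12 (pp_inj (h1.trans h2.symm))
  refine ⟨f, ctr, rad, ?_, hradpos, ?_, hinc⟩
  · intro p q h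
    exact ht_inj (pp_inj h)
  · intro b hb b' hb' hsph
    have hsub : b ⊆ b' := by
      intro p hp
      have : f p ∈ sphere (ctr b) (rad b) := (hinc p b hb).2 hp
      rw [hsph] at this
      exact (hinc p b' hb').1 this
    exact Finset.eq_of_subset_of_card_le hsub (by rw [hblock3 b hb, hblock3 b' hb'])
end

section
/- For every d ≥ 1, the d-dimensional hypercube graph Q_d is a unit-distance graph in the plane: there exists an injective map f : (Fin d → Bool) → ℝ² such that whenever two vertices of Q_d differ in exactly one coordinate, their images under f are at Euclidean distance 1. -/
open SimpleGraph

/-- The `d`-dimensional hypercube graph `Q_d`: vertices are functions `Fin d → Bool`,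
two vertices adjacent iff they differ in exactly one coordinate. -/
def cubeGraph (d : ℕ) : SimpleGraph (Fin d → Bool) where
  Adj x y := (Finset.univ.filter fun i => x i ≠ y i).card = 1
  symm := by
    constructor
    intro x y h
    have : (Finset.univ.filter fun i => y i ≠ x i)
        = (Finset.univ.filter fun i => x i ≠ y i) :=
      Finset.filter_congr fun i _ => ne_comm
    rw [this]
    exact h
  loopless := by constructor; intro x h; simp at h


noncomputable section

abbrev V2 := EuclideanSpace ℝ (Fin 2)

def gvec (t : ℝ) : V2 := (WithLp.equiv 2 (Fin 2 → ℝ)).symm ![t, Real.sqrt (1 - t^2)]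

lemma sphere_infinite : {v : V2 | ‖v‖ = 1}.Infinite := by
  have hinj : Set.InjOn gvec (Set.Ioo (-1:ℝ) 1) := by
    intro a _ b _ h
    have := congrFun (congrArg (WithLp.equiv 2 (Fin 2 → ℝ)) h) 0
    simpa [gvec] using this
  have hsub : gvec '' Set.Ioo (-1:ℝ) 1 ⊆ {v | ‖v‖ = 1} := by
    rintro _ ⟨t, ht, rfl⟩
    have h1 : (0:ℝ) ≤ 1 - t^2 := by nlinarith [ht.1, ht.2]
    simp only [Set.mem_setOf_eq]
    rw [EuclideanSpace.norm_eq, Fin.sum_univ_two]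
    simp [gvec, sq_abs, Real.sq_sqrt h1]
  exact Set.Infinite.mono hsub ((Set.Ioo_infinite (by norm_num)).image hinj)

lemma exists_good (d : ℕ) : ∃ v : Fin d → V2, (∀ i, ‖v i‖ = 1) ∧
    ∀ c : Fin d → ℝ, (∀ i, c i = -1 ∨ c i = 0 ∨ c i = 1) →
      ∑ i, c i • v i = 0 → ∀ i, c i = 0 := by
  induction d with
  | zero => exact ⟨fun i => i.elim0, fun i => i.elim0, fun c _ _ i => i.elim0⟩
  | succ d ih =>
    obtain ⟨v, hv1, hv2⟩ := ih
    letI : DecidableEq V2 := Classical.decEq _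
    set T : Finset (Fin d → ℝ) := Fintype.piFinset (fun _ => ({-1,0,1} : Finset ℝ)) with hT
    set F : Finset V2 := T.image (fun c => ∑ i, c i • v i) ∪ T.image (fun c => -∑ i, c i • v i)
      with hF
    obtain ⟨w, hw1, hw2⟩ := sphere_infinite.exists_notMem_finset F
    refine ⟨Fin.snoc v w, ?_, ?_⟩
    · intro i
      refine Fin.lastCases ?_ ?_ i
      · simpa using hw1
      · intro j; simpa using hv1 j
    · intro c hc hsum
      have hsum' : ∑ i : Fin d, c i.castSucc • v i + c (Fin.last d) • w = 0 := by
        rw [Fin.sum_univ_castSucc] at hsum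
        simpa using hsum
      have hmem : (fun i => c i.castSucc) ∈ T := by
        rw [hT, Fintype.mem_piFinset]
        intro i
        rcases hc i.castSucc with h | h | h <;> simp [h]
      have hlast : c (Fin.last d) = 0 := by
        rcases hc (Fin.last d) with h | h | h
        · exfalso
          apply hw2
          have : w = ∑ i : Fin d, c i.castSucc • v i := by
            rw [h] at hsum'; rw [neg_one_smul] at hsum'
            linear_combination (norm := module) -hsum'
          rw [hF, Finset.mem_union]
          left
          exact Finset.mem_image.2 ⟨_, hmem, this.symm⟩
        · exact h
        · exfalso
          apply hw2
          have : w = -∑ i : Fin d, c i.castSucc • v i := by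
            rw [h, one_smul] at hsum'
            linear_combination (norm := module) hsum'
          rw [hF, Finset.mem_union]
          right
          exact Finset.mem_image.2 ⟨_, hmem, this.symm⟩
      have hrest : ∀ i : Fin d, c i.castSucc = 0 := by
        apply hv2 _ (fun i => hc i.castSucc)
        rw [hlast, zero_smul, add_zero] at hsum'
        exact hsum'
      intro i
      refine Fin.lastCases hlast (fun j => hrest j) i

/-- For every `d ≥ 1`, the hypercube graph `Q_d` is a unit-distance graph in the plane:
there is an injective map of its vertices into `ℝ²` sending adjacent vertices to points
at Euclidean distance 1. -/
theorem cubeGraph_unit_distance (d : ℕ) (hd : 1 ≤ d) :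
    ∃ f : (Fin d → Bool) → EuclideanSpace ℝ (Fin 2),
      Function.Injective f ∧
      ∀ x y, (cubeGraph d).Adj x y → dist (f x) (f y) = 1 := by
  obtain ⟨v, hv1, hv2⟩ := exists_good d
  set f : (Fin d → Bool) → V2 := fun x => ∑ i, (if x i then (1:ℝ) else 0) • v i with hf
  have key : ∀ x y : Fin d → Bool, f x - f y
      = ∑ i, ((if x i then (1:ℝ) else 0) - (if y i then (1:ℝ) else 0)) • v i := by
    intro x y
    rw [hf]
    simp only [sub_smul]
    rw [Finset.sum_sub_distrib]
  have hcvals : ∀ (x y : Fin d → Bool) (i : Fin d),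
      ((if x i then (1:ℝ) else 0) - (if y i then (1:ℝ) else 0)) = -1 ∨
      ((if x i then (1:ℝ) else 0) - (if y i then (1:ℝ) else 0)) = 0 ∨
      ((if x i then (1:ℝ) else 0) - (if y i then (1:ℝ) else 0)) = 1 := by
    intro x y i
    cases x i <;> cases y i <;> norm_num
  refine ⟨f, ?_, ?_⟩
  · intro x y hxy
    have hz : ∑ i, ((if x i then (1:ℝ) else 0) - (if y i then (1:ℝ) else 0)) • v i = 0 := by
      rw [← key, hxy, sub_self]
    have := hv2 _ (hcvals x y) hz
    funext i
    have hi := this i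
    cases hx : x i <;> cases hy : y i <;> simp [hx, hy] at hi ⊢
  · intro x y hadj
    obtain ⟨i0, hi0⟩ := Finset.card_eq_one.mp hadj
    have hmem : ∀ i : Fin d, x i ≠ y i ↔ i = i0 := by
      intro i
      constructor
      · intro h
        have : i ∈ Finset.univ.filter fun j => x j ≠ y j := by simp [h]
        rw [hi0] at this; simpa using this
      · intro h
        have : i0 ∈ Finset.univ.filter fun j => x j ≠ y j := by rw [hi0]; simp
        simp at this
        rwa [h]
    have hne : x i0 ≠ y i0 := (hmem i0).mpr rfl
    have hsingle : f x - f y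
        = ((if x i0 then (1:ℝ) else 0) - (if y i0 then (1:ℝ) else 0)) • v i0 := by
      rw [key]
      apply Finset.sum_eq_single_of_mem i0 (Finset.mem_univ _)
      intro i _ hi
      have hxy : x i = y i := by
        by_contra h; exact hi ((hmem i).mp h)
      rw [hxy, sub_self, zero_smul]
    have habs : |((if x i0 then (1:ℝ) else 0) - (if y i0 then (1:ℝ) else 0))| = 1 := by
      cases hx : x i0 <;> cases hy : y i0 <;> first
        | (exfalso; exact hne (hx.trans hy.symm))
        | norm_num
    rw [dist_eq_norm, hsingle, norm_smul, Real.norm_eq_abs, habs, hv1 i0, one_mul]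
end
end

section
/- For every odd m ≥ 3 and every d ≥ 0, the Cartesian (box) product C_m □ Q_d of the cycle of length m with the d-dimensional hypercube graph is a unit-distance graph in the plane: there exists an injective map f : ZMod m × (Fin d → Bool) → ℝ² such that any two vertices adjacent in C_m □ Q_d have images at Euclidean distance 1. (This graph is (d+2)-regular with m·2^d vertices, so for any N and any k > 2 it yields k-regular unit-distance graphs on more than N vertices.) -/
open SimpleGraph

/-- The cycle graph `C_m` on `ZMod m`: `i` adjacent to `j` iff `i - j = ±1`. -/
def cycleGraph' (m : ℕ) : SimpleGraph (ZMod m) where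
  Adj i j := i ≠ j ∧ (i - j = 1 ∨ j - i = 1)
  symm := ⟨fun _ _ h => ⟨h.1.symm, h.2.symm⟩⟩
  loopless := ⟨fun _ h => h.1 rfl⟩

noncomputable section

namespace UnitDistAux

lemma cube_adj_iff {d : ℕ} (x y : Fin d → Bool) :
    (cubeGraph d).Adj x y ↔ (Finset.univ.filter fun i => x i ≠ y i).card = 1 := Iff.rfl

lemma cube_succ_adj {d : ℕ} (x y : Fin (d+1) → Bool) :
    (cubeGraph (d+1)).Adj x y ↔
      (x ∘ Fin.castSucc = y ∘ Fin.castSucc ∧ x (Fin.last d) ≠ y (Fin.last d)) ∨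
      ((cubeGraph d).Adj (x ∘ Fin.castSucc) (y ∘ Fin.castSucc)
        ∧ x (Fin.last d) = y (Fin.last d)) := by
  rw [cube_adj_iff, cube_adj_iff]
  rw [Finset.card_filter, Fin.sum_univ_castSucc, Finset.card_filter]
  have hfun : x ∘ Fin.castSucc = y ∘ Fin.castSucc ↔
      ∀ i : Fin d, x i.castSucc = y i.castSucc := by
    rw [funext_iff]; rfl
  by_cases hl : x (Fin.last d) = y (Fin.last d)
  · simp only [Function.comp, hl, ne_eq, not_true_eq_false, if_false, add_zero,
      not_false_eq_true, and_true, and_false, false_and, or_false, false_or]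
  · simp only [Function.comp, hl, ne_eq, not_false_eq_true, if_true, and_true, and_false,
      false_and, or_false, false_or]
    rw [hfun]
    constructor
    · intro h
      have h0 : (∑ i : Fin d, if ¬ x i.castSucc = y i.castSucc then 1 else 0) = 0 := by
        omega
      intro i
      by_contra hi
      have := Finset.sum_eq_zero_iff.mp h0 i (Finset.mem_univ i)
      simp [hi] at this
    · intro h
      rw [Finset.sum_eq_zero fun i _ => by simp [h i]]

def e (m : ℕ) (n : ℤ) : ℂ := Complex.exp (2 * Real.pi * Complex.I * n / m)

lemma abs_e (m : ℕ) (n : ℤ) : ‖e m n‖ = 1 := by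
  have : (2 * Real.pi * Complex.I * n / m) = ((2 * Real.pi * n / m : ℝ) : ℂ) * Complex.I := by
    push_cast; ring
  rw [e, this, Complex.norm_exp_ofReal_mul_I]

lemma e_congr {m : ℕ} (hm : m ≠ 0) {a b : ℤ} (h : (a : ZMod m) = b) : e m a = e m b := by
  have hdvd : (m : ℤ) ∣ b - a := ((ZMod.intCast_eq_intCast_iff _ _ _).mp h).dvd
  obtain ⟨k, hk⟩ := hdvd
  have hb : (b : ℂ) = a + m * k := by
    have : b = a + m * k := by omega
    rw [this]; push_cast; ring
  have hmC : (m : ℂ) ≠ 0 := Nat.cast_ne_zero.mpr hm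
  rw [e, e, hb]
  rw [show 2 * Real.pi * Complex.I * ((a : ℂ) + m * k) / m
      = 2 * Real.pi * Complex.I * a / m + k * (2 * Real.pi * Complex.I) by
    field_simp]
  rw [Complex.exp_add, Complex.exp_int_mul_two_pi_mul_I, mul_one]

lemma e_add_one {m : ℕ} (hm : m ≠ 0) (a : ℤ) : e m (a + 1) = e m a * e m 1 := by
  have hmC : (m : ℂ) ≠ 0 := Nat.cast_ne_zero.mpr hm
  rw [e, e, e, ← Complex.exp_add]
  congr 1
  push_cast
  field_simp

lemma e_inj {m : ℕ} (hm : m ≠ 0) {a b : ℤ} (ha : 0 ≤ a) (ha' : a < m) (hb : 0 ≤ b)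
    (hb' : b < m) (h : e m a = e m b) : a = b := by
  have hexp : Complex.exp (2 * Real.pi * Complex.I * a / m - 2 * Real.pi * Complex.I * b / m)
      = 1 := by
    rw [Complex.exp_sub]
    rw [e, e] at h
    rw [h]
    exact div_self (Complex.exp_ne_zero _)
  obtain ⟨n, hn⟩ := Complex.exp_eq_one_iff.mp hexp
  have hmC : (m : ℂ) ≠ 0 := Nat.cast_ne_zero.mpr hm
  have hpi : (Real.pi : ℂ) ≠ 0 := Complex.ofReal_ne_zero.mpr Real.pi_ne_zero
  have hC : (a : ℂ) - b = n * m := by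
    field_simp at hn
    have h2 : (2 : ℂ) * Real.pi * Complex.I * a - 2 * Real.pi * Complex.I * b
        = 2 * Real.pi * Complex.I * (a - b) := by ring
    have h3 : (n : ℂ) * (2 * Real.pi * Complex.I) * m = 2 * Real.pi * Complex.I * (n * m) := by
      ring
    rw [hn]; ring
  have hZ : a - b = n * m := by exact_mod_cast hC
  have hm1 : (1 : ℤ) ≤ m := by exact_mod_cast Nat.one_le_iff_ne_zero.mpr hm
  rcases lt_trichotomy n 0 with h1 | h1 | h1
  · have : n ≤ -1 := by omega
    nlinarith
  · rw [h1] at hZ; omega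
  · have : 1 ≤ n := by omega
    nlinarith

def cc (m : ℕ) : ℝ := 2 - 2 * Real.cos (2 * Real.pi / m)

lemma cc_pos {m : ℕ} (hm : 3 ≤ m) : 0 < cc m := by
  have hm0 : (0:ℝ) < m := by exact_mod_cast Nat.lt_of_lt_of_le (by norm_num : 0 < 3) hm
  have hm1 : (1:ℝ) < m := by exact_mod_cast lt_of_lt_of_le (by norm_num) hm
  have h1 : 0 < 2 * Real.pi / m := by positivity
  have h2 : 2 * Real.pi / m < 2 * Real.pi := by
    rw [div_lt_iff₀ hm0]
    nlinarith [Real.pi_pos]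
  have hcos : Real.cos (2 * Real.pi / m) ≠ 1 := by
    intro hc
    exact h1.ne' ((Real.cos_eq_one_iff_of_lt_of_lt (by linarith) h2).mp hc)
  have hle := Real.cos_le_one (2 * Real.pi / m)
  have : Real.cos (2 * Real.pi / m) < 1 := lt_of_le_of_ne hle hcos
  unfold cc; linarith

def RR (m : ℕ) : ℝ := (Real.sqrt (cc m))⁻¹

lemma RR_pos {m : ℕ} (hm : 3 ≤ m) : 0 < RR m := by
  have := cc_pos hm
  unfold RR
  positivity

lemma abs_e_one_sub_one {m : ℕ} (hm : 3 ≤ m) :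
    ‖e m 1 - 1‖ = Real.sqrt (cc m) := by
  have h1 : (2 * Real.pi * Complex.I * (1:ℤ) / m) = ((2 * Real.pi / m : ℝ) : ℂ) * Complex.I := by
    push_cast; ring
  rw [e, h1]
  set θ := 2 * Real.pi / (m:ℝ) with hθ
  rw [Complex.norm_def, Complex.normSq_apply]
  have hre : (Complex.exp (θ * Complex.I) - 1).re = Real.cos θ - 1 := by
    simp [Complex.exp_ofReal_mul_I_re]
  have him : (Complex.exp (θ * Complex.I) - 1).im = Real.sin θ := by
    simp [Complex.exp_ofReal_mul_I_im]
  rw [hre, him]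
  congr 1
  have := Real.sin_sq_add_cos_sq θ
  unfold cc
  rw [← hθ]
  nlinarith [this]

def f0 (m : ℕ) : ZMod m → ℂ := fun k => (RR m : ℂ) * e m k.val

lemma f0_dist {m : ℕ} (hm : 3 ≤ m) {i j : ZMod m} (hij : i - j = 1) :
    ‖f0 m i - f0 m j‖ = 1 := by
  haveI : NeZero m := ⟨by omega⟩
  have hm0 : m ≠ 0 := by omega
  have hij' : i = j + 1 := by
    rw [sub_eq_iff_eq_add] at hij
    rw [hij]; ring
  have hcast : ((i.val : ℤ) : ZMod m) = (((j.val : ℤ) + 1 : ℤ) : ZMod m) := by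
    push_cast
    rw [ZMod.natCast_val, ZMod.cast_id, ZMod.natCast_val, ZMod.cast_id, hij']
  have he : e m i.val = e m ((j.val : ℤ) + 1) := e_congr hm0 hcast
  have key : f0 m i - f0 m j = (RR m : ℂ) * e m j.val * (e m 1 - 1) := by
    rw [f0, f0, he, e_add_one hm0]
    ring
  rw [key, norm_mul, norm_mul, Complex.norm_of_nonneg (RR_pos hm).le, abs_e,
    mul_one, abs_e_one_sub_one hm, RR]
  exact inv_mul_cancel₀ (Real.sqrt_ne_zero'.mpr (cc_pos hm))

lemma f0_inj {m : ℕ} (hm : 3 ≤ m) : Function.Injective (f0 m) := by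
  haveI : NeZero m := ⟨by omega⟩
  have hm0 : m ≠ 0 := by omega
  intro i j h
  have hR : ((RR m : ℝ) : ℂ) ≠ 0 := by
    exact_mod_cast Complex.ofReal_ne_zero.mpr (RR_pos hm).ne'
  have he : e m i.val = e m j.val := mul_left_cancel₀ hR h
  have hv : (i.val : ℤ) = j.val :=
    e_inj hm0 (by positivity) (by exact_mod_cast ZMod.val_lt i) (by positivity)
      (by exact_mod_cast ZMod.val_lt j) he
  have : i.val = j.val := by exact_mod_cast hv
  calc i = ((i.val : ℕ) : ZMod m) := by rw [ZMod.natCast_val, ZMod.cast_id]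
    _ = ((j.val : ℕ) : ZMod m) := by rw [this]
    _ = j := by rw [ZMod.natCast_val, ZMod.cast_id]

lemma bool_ext {d : ℕ} {x y : Fin (d+1) → Bool} (h1 : x ∘ Fin.castSucc = y ∘ Fin.castSucc)
    (h2 : x (Fin.last d) = y (Fin.last d)) : x = y :=
  funext fun i => Fin.lastCases h2 (fun j => congrFun h1 j) i

lemma exists_unit_vector (S : Set ℂ) (hS : S.Finite) :
    ∃ v : ℂ, ‖v‖ = 1 ∧ v ∉ S := by
  set g : ℝ → ℂ := fun t => Complex.exp ((t : ℂ) * Complex.I) with hg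
  have hinj : Set.InjOn g (Set.Ioo (0:ℝ) 1) := by
    intro a ha b hb hab
    obtain ⟨n, hn⟩ := Complex.exp_eq_exp_iff_exists_int.mp hab
    have : ((a - b - n * (2 * Real.pi) : ℝ) : ℂ) * Complex.I = 0 := by
      push_cast
      rw [sub_mul, sub_mul, hn]
      ring
    have h0 : (a - b - n * (2 * Real.pi) : ℝ) = 0 := by
      have := mul_eq_zero.mp this
      rcases this with h | h
      · exact_mod_cast h
      · exact absurd h Complex.I_ne_zero
    have hab' : a - b = n * (2 * Real.pi) := by linarith
    have hpi := Real.pi_gt_three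
    have hn0 : n = 0 := by
      rcases lt_trichotomy n 0 with h1 | h1 | h1
      · have : (n : ℝ) ≤ -1 := by exact_mod_cast (by omega : n ≤ -1)
        nlinarith [ha.1, ha.2, hb.1, hb.2]
      · exact h1
      · have : (1 : ℝ) ≤ n := by exact_mod_cast h1
        nlinarith [ha.1, ha.2, hb.1, hb.2]
    rw [hn0] at hab'
    push_cast at hab'
    linarith
  have hinf : (g '' Set.Ioo (0:ℝ) 1).Infinite :=
    Set.Infinite.image hinj (Set.Ioo_infinite (by norm_num))
  have hne : ((g '' Set.Ioo (0:ℝ) 1) \ S).Nonempty := (hinf.diff hS).nonempty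
  obtain ⟨v, hv1, hv2⟩ := hne
  obtain ⟨t, -, rfl⟩ := hv1
  exact ⟨g t, Complex.norm_exp_ofReal_mul_I t, hv2⟩

lemma abs_if_diff {v : ℂ} (hv : ‖v‖ = 1) (w : ℂ) (b : Bool) :
    ‖(w + if (!b) = true then v else 0) - (w + if b = true then v else 0)‖ = 1 := by
  cases b
  · rw [show (w + if (!false) = true then v else 0) - (w + if false = true then v else 0)
        = v by simp]
    exact hv
  · rw [show (w + if (!true) = true then v else 0) - (w + if true = true then v else 0)
        = -v by simp]
    rw [norm_neg]
    exact hv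

lemma aux (m d : ℕ) (hm : 3 ≤ m) :
    ∃ f : ZMod m × (Fin d → Bool) → ℂ, Function.Injective f ∧
      ∀ x y, (cycleGraph' m □ cubeGraph d).Adj x y → ‖f x - f y‖ = 1 := by
  haveI : NeZero m := ⟨by omega⟩
  induction d with
  | zero =>
    refine ⟨fun p => f0 m p.1, ?_, ?_⟩
    · rintro ⟨a, x⟩ ⟨b, y⟩ h
      have h1 : a = b := f0_inj hm h
      exact Prod.ext h1 (funext fun i => i.elim0)
    · rintro ⟨a, x⟩ ⟨b, y⟩ hadj
      rw [boxProd_adj] at hadj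
      rcases hadj with ⟨hcyc, -⟩ | ⟨hcube, -⟩
      · rcases (hcyc : a ≠ b ∧ (a - b = 1 ∨ b - a = 1)).2 with h | h
        · exact f0_dist hm h
        · rw [norm_sub_rev]; exact f0_dist hm h
      · rw [cube_adj_iff] at hcube
        simp at hcube
  | succ d ih =>
    obtain ⟨f, hinj, hdist⟩ := ih
    set S := Set.range
      (fun p : (ZMod m × (Fin d → Bool)) × (ZMod m × (Fin d → Bool)) => f p.1 - f p.2) with hS
    obtain ⟨v, hv1, hv2⟩ := exists_unit_vector S (Set.finite_range _)
    refine ⟨fun p => f (p.1, p.2 ∘ Fin.castSucc) + (if p.2 (Fin.last d) then v else 0), ?_, ?_⟩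
    · rintro ⟨a, x⟩ ⟨b, y⟩ h
      simp only at h
      by_cases hl : x (Fin.last d) = y (Fin.last d)
      · simp only [hl] at h
        have h2 : f (a, x ∘ Fin.castSucc) = f (b, y ∘ Fin.castSucc) := by
          exact add_right_cancel h
        have h3 := hinj h2
        rw [Prod.mk.injEq] at h3
        exact Prod.ext h3.1 (bool_ext h3.2 hl)
      · exfalso
        apply hv2
        cases hx : x (Fin.last d) <;> cases hy : y (Fin.last d) <;>
          simp [hx, hy] at h hl
        · exact ⟨((a, x ∘ Fin.castSucc), (b, y ∘ Fin.castSucc)), by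
            simp only; linear_combination h⟩
        · exact ⟨((b, y ∘ Fin.castSucc), (a, x ∘ Fin.castSucc)), by
            simp only; linear_combination -h⟩
    · rintro ⟨a, x⟩ ⟨b, y⟩ hadj
      rw [boxProd_adj] at hadj
      rcases hadj with ⟨hcyc, hxy⟩ | ⟨hcube, hab⟩
      · simp only at hcyc hxy
        subst hxy
        simp only
        have hterm : f (a, x ∘ Fin.castSucc) + (if x (Fin.last d) then v else 0)
            - (f (b, x ∘ Fin.castSucc) + (if x (Fin.last d) then v else 0))
            = f (a, x ∘ Fin.castSucc) - f (b, x ∘ Fin.castSucc) := by ring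
        rw [hterm]
        exact hdist _ _ (boxProd_adj.mpr (Or.inl ⟨hcyc, rfl⟩))
      · simp only at hcube hab
        subst hab
        simp only
        rcases (cube_succ_adj x y).mp hcube with ⟨hcomp, hlast⟩ | ⟨hadjd, hlast⟩
        · rw [hcomp]
          have hx : x (Fin.last d) = !(y (Fin.last d)) := by
            cases hxv : x (Fin.last d) <;> cases hyv : y (Fin.last d) <;> simp_all
          simp only [hx]
          exact abs_if_diff hv1 _ _
        · simp only [hlast]
          have hterm : f (a, x ∘ Fin.castSucc) + (if y (Fin.last d) then v else 0)
              - (f (a, y ∘ Fin.castSucc) + (if y (Fin.last d) then v else 0))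
              = f (a, x ∘ Fin.castSucc) - f (a, y ∘ Fin.castSucc) := by ring
          rw [hterm]
          exact hdist _ _ (boxProd_adj.mpr (Or.inr ⟨hadjd, rfl⟩))

end UnitDistAux

end

/-- For every odd `m ≥ 3` and every `d ≥ 0` the Cartesian (box) product `C_m □ Q_d` of
the cycle of length `m` with the `d`-dimensional hypercube graph is a unit-distance graph
in the plane: there is an injective map of its vertices into `ℝ²` sending adjacent
vertices to points at Euclidean distance 1. -/
theorem cycle_boxProd_cube_unit_distance (m d : ℕ) (hm : 3 ≤ m) (hodd : Odd m) :
    ∃ f : ZMod m × (Fin d → Bool) → EuclideanSpace ℝ (Fin 2),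
      Function.Injective f ∧
      ∀ x y, (cycleGraph' m □ cubeGraph d).Adj x y → dist (f x) (f y) = 1 := by
  obtain ⟨f, hinj, hdist⟩ := UnitDistAux.aux m d hm
  let L := Complex.orthonormalBasisOneI.repr
  refine ⟨fun p => L (f p), fun p q h => hinj (L.injective h), fun x y h => ?_⟩
  rw [L.dist_map, Complex.dist_eq]
  exact hdist x y h
end
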